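/- arXiv:1410.6200 — 5 statements merged into one kernel-verified Lean document; each statement's English description precedes it below -/
import Mathlib

section
/- Let E_r(z) = {x ∈ ℝ² : (x₁−z₁)² + ((x₂−z₂)/λ)² < r²} be an ellipse with λ > 0, and let k be the fundamental singular strain at z with Burgers modulus b, and L = diag(μ, μλ²). Then Lk(x) · n(x) = 0 for every x ∈ ∂E_r(z), where n is the outward unit normal to E_r(z). -/
/-- The fundamental singular strain of a screw dislocation at `z` with Burgers
modulus `b`, for Lamé modulus `lam`. -/
noncomputable def kfun (lam b : ℝ) (z x : ℝ × ℝ) : ℝ × ℝ :=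
  (b * lam / (2 * Real.pi * (lam ^ 2 * (x.1 - z.1) ^ 2 + (x.2 - z.2) ^ 2)) * (-(x.2 - z.2)),
   b * lam / (2 * Real.pi * (lam ^ 2 * (x.1 - z.1) ^ 2 + (x.2 - z.2) ^ 2)) * (x.1 - z.1))

/-- On the boundary of the ellipse `E_r(z) = {x : (x₁−z₁)² + ((x₂−z₂)/λ)² < r²}`,
whose points are `z + (r cos τ, λ r sin τ)` and whose outward unit normal is
`(λ cos τ, sin τ)/√(λ²cos²τ + sin²τ)`, one has `Lk · n = 0` with `L = diag(μ, μλ²)`. -/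
theorem L_kfun_dot_normal_eq_zero (lam mu b r : ℝ) (hlam : 0 < lam) (hmu : 0 < mu)
    (hr : 0 < r) (z : ℝ × ℝ) :
    ∀ τ : ℝ,
      mu * (kfun lam b z (z.1 + r * Real.cos τ, z.2 + lam * r * Real.sin τ)).1 *
          (lam * Real.cos τ / Real.sqrt (lam ^ 2 * Real.cos τ ^ 2 + Real.sin τ ^ 2))
        + mu * lam ^ 2 *
            (kfun lam b z (z.1 + r * Real.cos τ, z.2 + lam * r * Real.sin τ)).2 *
          (Real.sin τ / Real.sqrt (lam ^ 2 * Real.cos τ ^ 2 + Real.sin τ ^ 2)) = 0 := by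
  intro τ
  simp only [kfun, add_sub_cancel_left]
  ring
end

section
/- For 0 < ε < R, the elastic energy of the fundamental singular strain k over the elliptical annulus A = E_R(z) \ closure(E_ε(z)) satisfies ∫_A (1/2) k · Lk dx = (μ λ b²)/(4π) · log(R/ε). -/
open MeasureTheory Set Real Filter Topology

/-- The open ellipse `E_r(z) = {x : (x₁−z₁)² + ((x₂−z₂)/λ)² < r²}`. -/
def ellipse (lam : ℝ) (z : ℝ × ℝ) (r : ℝ) : Set (ℝ × ℝ) :=
  {x : ℝ × ℝ | (x.1 - z.1) ^ 2 + ((x.2 - z.2) / lam) ^ 2 < r ^ 2}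

lemma closure_ellipse (lam ε : ℝ) (hε : 0 < ε) (z : ℝ × ℝ) :
    closure (ellipse lam z ε) = {x : ℝ × ℝ | (x.1 - z.1) ^ 2 + ((x.2 - z.2) / lam) ^ 2 ≤ ε ^ 2} := by
  apply Subset.antisymm
  · have hq : Continuous fun x : ℝ × ℝ => (x.1 - z.1) ^ 2 + ((x.2 - z.2) / lam) ^ 2 := by
      fun_prop
    exact closure_lt_subset_le hq continuous_const
  · intro x hx
    simp only [mem_setOf_eq] at hx
    have hev : ∀ᶠ t in 𝓝[<] (1:ℝ), t ∈ Ioo (0:ℝ) 1 :=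
      Ioo_mem_nhdsLT_of_mem (by constructor <;> norm_num)
    have htend : Filter.Tendsto (fun t : ℝ => ((z.1 + t * (x.1 - z.1), z.2 + t * (x.2 - z.2)) : ℝ × ℝ))
        (𝓝[<] (1:ℝ)) (𝓝 x) := by
      have h0 : Filter.Tendsto (fun t : ℝ => ((z.1 + t * (x.1 - z.1), z.2 + t * (x.2 - z.2)) : ℝ × ℝ))
          (𝓝 (1:ℝ)) (𝓝 ((z.1 + 1 * (x.1 - z.1), z.2 + 1 * (x.2 - z.2)) : ℝ × ℝ)) := by
        apply Continuous.tendsto; fun_prop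
      simp only [one_mul] at h0
      have hx' : ((z.1 + (x.1 - z.1), z.2 + (x.2 - z.2)) : ℝ × ℝ) = x := by
        ext <;> simp
      rw [hx'] at h0
      exact h0.mono_left nhdsWithin_le_nhds
    refine mem_closure_of_tendsto htend ?_
    filter_upwards [hev] with t ht
    have h1 : (0:ℝ) < t := ht.1
    have h2 : t < 1 := ht.2
    simp only [ellipse, mem_setOf_eq]
    have heq : (z.1 + t * (x.1 - z.1) - z.1) ^ 2 + ((z.2 + t * (x.2 - z.2) - z.2) / lam) ^ 2
        = t ^ 2 * ((x.1 - z.1) ^ 2 + ((x.2 - z.2) / lam) ^ 2) := by ring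
    rw [heq]
    have hq : (0:ℝ) ≤ (x.1 - z.1) ^ 2 + ((x.2 - z.2) / lam) ^ 2 := by positivity
    calc t ^ 2 * ((x.1 - z.1) ^ 2 + ((x.2 - z.2) / lam) ^ 2) ≤ t ^ 2 * ε ^ 2 := by nlinarith
      _ < 1 * ε ^ 2 := by
          have ht2 : t ^ 2 < 1 := by nlinarith
          nlinarith [mul_pos (sub_pos.mpr ht2) (pow_pos hε 2)]
      _ = ε ^ 2 := one_mul _

/-- The elastic energy `∫ W(k)` over the elliptical annulus `E_R(z) \ closure(E_ε(z))`
equals `(μλb²/4π) log(R/ε)`, where `W(h) = (1/2) h·Lh` and `L = diag(μ, μλ²)`. -/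
theorem energy_annulus (lam mu b ε R : ℝ) (hlam : 0 < lam) (hmu : 0 < mu)
    (hε : 0 < ε) (hεR : ε < R) (z : ℝ × ℝ) :
    (∫ x in ellipse lam z R \ closure (ellipse lam z ε),
        (1 / 2 : ℝ) * ((kfun lam b z x).1 * (mu * (kfun lam b z x).1)
          + (kfun lam b z x).2 * (mu * lam ^ 2 * (kfun lam b z x).2)))
      = mu * lam * b ^ 2 / (4 * Real.pi) * Real.log (R / ε) := by
  have hlam0 : lam ≠ 0 := hlam.ne'
  have hpi : Real.pi ≠ 0 := Real.pi_ne_zero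
  -- the linear part of the change of variables
  set L : (ℝ × ℝ) →L[ℝ] (ℝ × ℝ) := LinearMap.toContinuousLinearMap
    (Matrix.toLin (Module.Basis.finTwoProd ℝ) (Module.Basis.finTwoProd ℝ) !![1, 0; 0, lam]) with hLdef
  have hLapp : ∀ u : ℝ × ℝ, L u = (u.1, lam * u.2) := by
    intro u
    rw [hLdef, Matrix.toLin_finTwoProd_toContinuousLinearMap]
    simp
  have hLdet : L.det = lam := by
    simp only [hLdef, ContinuousLinearMap.det, LinearMap.coe_toContinuousLinearMap,
      LinearMap.det_toLin, Matrix.det_fin_two_of]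
    ring
  set T : ℝ × ℝ → ℝ × ℝ := fun u => (u.1 + z.1, lam * u.2 + z.2) with hTdef
  have hTL : T = fun u => L u + z := by
    funext u; rw [hLapp]; rfl
  have hderiv : ∀ u : ℝ × ℝ, HasFDerivAt T L u := by
    intro u; rw [hTL]; exact L.hasFDerivAt.add_const z
  set s : Set (ℝ × ℝ) := {u | ε ^ 2 < u.1 ^ 2 + u.2 ^ 2} ∩ {u | u.1 ^ 2 + u.2 ^ 2 < R ^ 2}
    with hsdef
  have hq2 : Continuous fun u : ℝ × ℝ => u.1 ^ 2 + u.2 ^ 2 := by fun_prop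
  have hs : MeasurableSet s :=
    ((isOpen_lt continuous_const hq2).inter (isOpen_lt hq2 continuous_const)).measurableSet
  have hTinj : InjOn T s := by
    intro u _ v _ h
    rw [Prod.ext_iff] at h
    obtain ⟨h1, h2⟩ := h
    simp only [hTdef] at h1 h2
    have : u.1 = v.1 := by linarith
    have : u.2 = v.2 := by
      have h3 : lam * u.2 = lam * v.2 := by linarith
      exact mul_left_cancel₀ hlam0 h3
    exact Prod.ext ‹u.1 = v.1› ‹u.2 = v.2›
  have himg : T '' s = ellipse lam z R \ closure (ellipse lam z ε) := by
    rw [closure_ellipse lam ε hε z]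
    ext x
    constructor
    · rintro ⟨u, hu, rfl⟩
      have hval : ((T u).1 - z.1) ^ 2 + (((T u).2 - z.2) / lam) ^ 2 = u.1 ^ 2 + u.2 ^ 2 := by
        simp only [hTdef]
        field_simp
        ring
      constructor
      · simp only [ellipse, mem_setOf_eq, hval]
        exact hu.2
      · simp only [mem_setOf_eq, hval]
        exact not_le.mpr hu.1
    · rintro ⟨hR, hclo⟩
      refine ⟨(x.1 - z.1, (x.2 - z.2) / lam), ⟨?_, ?_⟩, ?_⟩
      · simp only [mem_setOf_eq]
        exact lt_of_not_ge (by simpa using hclo)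
      · exact hR
      · simp only [hTdef]
        ext <;> simp <;> field_simp <;> ring
  rw [← himg, integral_image_eq_integral_abs_det_fderiv_smul volume hs
    (fun u _ => (hderiv u).hasFDerivWithinAt) hTinj]
  have hcongr : ∀ u ∈ s,
      |L.det| • ((1 / 2 : ℝ) * ((kfun lam b z (T u)).1 * (mu * (kfun lam b z (T u)).1)
          + (kfun lam b z (T u)).2 * (mu * lam ^ 2 * (kfun lam b z (T u)).2)))
      = mu * b ^ 2 * lam / (8 * Real.pi ^ 2) * (u.1 ^ 2 + u.2 ^ 2)⁻¹ := by
    intro u hu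
    have hn : 0 < u.1 ^ 2 + u.2 ^ 2 := lt_trans (pow_pos hε 2) hu.1
    rw [hLdet, abs_of_pos hlam, smul_eq_mul]
    simp only [kfun, hTdef]
    have h1 : u.1 + z.1 - z.1 = u.1 := by ring
    have h2 : lam * u.2 + z.2 - z.2 = lam * u.2 := by ring
    rw [h1, h2]
    have hden : lam ^ 2 * u.1 ^ 2 + (lam * u.2) ^ 2 ≠ 0 := by
      have : lam ^ 2 * u.1 ^ 2 + (lam * u.2) ^ 2 = lam ^ 2 * (u.1 ^ 2 + u.2 ^ 2) := by ring
      rw [this]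
      positivity
    field_simp
    ring
  rw [setIntegral_congr_fun hs hcongr, integral_const_mul]
  -- now compute ∫_s (u₁²+u₂²)⁻¹ via polar coordinates
  have hpolar := integral_comp_polarCoord_symm (Set.indicator s fun u : ℝ × ℝ => (u.1 ^ 2 + u.2 ^ 2)⁻¹)
  rw [integral_indicator hs] at hpolar
  have htgt : ∀ p ∈ polarCoord.target,
      p.1 • (Set.indicator s (fun u : ℝ × ℝ => (u.1 ^ 2 + u.2 ^ 2)⁻¹) (polarCoord.symm p))
      = Set.indicator (Ioo ε R ×ˢ Ioo (-Real.pi) Real.pi) (fun p : ℝ × ℝ => p.1⁻¹) p := by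
    intro p hp
    have hp' : p ∈ Ioi (0:ℝ) ×ˢ Ioo (-Real.pi) Real.pi := hp
    have hp1 : 0 < p.1 := hp'.1
    have hsymm : polarCoord.symm p = (p.1 * Real.cos p.2, p.1 * Real.sin p.2) := rfl
    have hval : (p.1 * Real.cos p.2) ^ 2 + (p.1 * Real.sin p.2) ^ 2 = p.1 ^ 2 := by
      rw [mul_pow, mul_pow, ← mul_add, Real.cos_sq_add_sin_sq, mul_one]
    by_cases hmem : ε < p.1 ∧ p.1 < R
    · have hsm : polarCoord.symm p ∈ s := by
        constructor <;> simp only [mem_setOf_eq, hsymm, hval]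
        · exact pow_lt_pow_left₀ hmem.1 hε.le two_ne_zero
        · exact pow_lt_pow_left₀ hmem.2 hp1.le two_ne_zero
      rw [Set.indicator_of_mem hsm, Set.indicator_of_mem (by exact ⟨⟨hmem.1, hmem.2⟩, hp'.2⟩)]
      simp only [hsymm, hval]
      rw [smul_eq_mul, pow_two, mul_inv]
      field_simp
    · have hsm : polarCoord.symm p ∉ s := by
        intro hcon
        obtain ⟨hc1, hc2⟩ := hcon
        simp only [mem_setOf_eq, hsymm, hval] at hc1 hc2
        apply hmem
        constructor
        · nlinarith
        · nlinarith
      rw [Set.indicator_of_notMem hsm,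
        Set.indicator_of_notMem (fun hcon => hmem ⟨hcon.1.1, hcon.1.2⟩), smul_zero]
  rw [setIntegral_congr_fun polarCoord.open_target.measurableSet htgt] at hpolar
  rw [setIntegral_indicator (measurableSet_Ioo.prod measurableSet_Ioo)] at hpolar
  have hsub : (Ioo ε R ×ˢ Ioo (-Real.pi) Real.pi) ⊆ polarCoord.target :=
    Set.prod_mono (fun x hx => lt_trans hε hx.1) (fun x hx => hx)
  rw [Set.inter_eq_self_of_subset_right hsub] at hpolar
  have hprod : (∫ p in Ioo ε R ×ˢ Ioo (-Real.pi) Real.pi, (p.1)⁻¹)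
      = (∫ x in Ioo ε R, x⁻¹) * (∫ y in Ioo (-Real.pi) Real.pi, (1:ℝ)) := by
    rw [Measure.volume_eq_prod, ← setIntegral_prod_mul (fun x : ℝ => x⁻¹) (fun _ : ℝ => (1:ℝ))]
    simp
  have hlog : (∫ x in Ioo ε R, x⁻¹) = Real.log (R / ε) := by
    rw [← integral_Ioc_eq_integral_Ioo, ← intervalIntegral.integral_of_le hεR.le,
      integral_inv_of_pos hε (hε.trans hεR)]
  have harea : (∫ y in Ioo (-Real.pi) Real.pi, (1:ℝ)) = 2 * Real.pi := by
    simp [Real.volume_Ioo]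
    rw [max_eq_left (by positivity)]
    ring
  rw [hprod, hlog, harea] at hpolar
  rw [← hpolar]
  field_simp
  ring
end

section
/- On the ellipse ∂E_R(z), the quadratic form satisfies k(x; z) · L k(x; z) = μ b² / (4π² R²), a constant independent of the point x ∈ ∂E_R(z); consequently ∫_{∂E_R(z)} (1/2)(k · Lk) n ds = 0, where n is the outward unit normal. -/
/-- The quadratic form `k · Lk` with `L = diag(μ, μλ²)`. -/
noncomputable def kLk (lam mu b : ℝ) (z x : ℝ × ℝ) : ℝ :=
  (kfun lam b z x).1 * (mu * (kfun lam b z x).1)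
    + (kfun lam b z x).2 * (mu * lam ^ 2 * (kfun lam b z x).2)

/-- On `∂E_R(z)` (points `z + (R cos τ, λ R sin τ)`), `k·Lk = μb²/(4π²R²)` is constant;
consequently `∫_{∂E_R(z)} (1/2)(k·Lk) n ds = 0`, where in eccentric anomaly
`n ds = R (λ cos τ, sin τ) dτ`. -/
theorem kLk_const_and_boundary_integral_zero (lam mu b R : ℝ)
    (hlam : 0 < lam) (hmu : 0 < mu) (hR : 0 < R) (z : ℝ × ℝ) :
    (∀ τ : ℝ,
      kLk lam mu b z (z.1 + R * Real.cos τ, z.2 + lam * R * Real.sin τ)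
        = mu * b ^ 2 / (4 * Real.pi ^ 2 * R ^ 2))
    ∧ (∫ τ in (0:ℝ)..(2 * Real.pi),
        (1 / 2 : ℝ) * kLk lam mu b z (z.1 + R * Real.cos τ, z.2 + lam * R * Real.sin τ)
          * (R * (lam * Real.cos τ))) = 0
    ∧ (∫ τ in (0:ℝ)..(2 * Real.pi),
        (1 / 2 : ℝ) * kLk lam mu b z (z.1 + R * Real.cos τ, z.2 + lam * R * Real.sin τ)
          * (R * Real.sin τ)) = 0 := by
  have hpi := Real.pi_pos
  have hconst : ∀ τ : ℝ,
      kLk lam mu b z (z.1 + R * Real.cos τ, z.2 + lam * R * Real.sin τ)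
        = mu * b ^ 2 / (4 * Real.pi ^ 2 * R ^ 2) := by
    intro τ
    have hs : Real.sin τ ^ 2 + Real.cos τ ^ 2 = 1 := Real.sin_sq_add_cos_sq τ
    have hden : lam ^ 2 * (R * Real.cos τ) ^ 2 + (lam * R * Real.sin τ) ^ 2
        = lam ^ 2 * R ^ 2 := by linear_combination lam ^ 2 * R ^ 2 * hs
    simp only [kLk, kfun]
    rw [show z.1 + R * Real.cos τ - z.1 = R * Real.cos τ by ring,
      show z.2 + lam * R * Real.sin τ - z.2 = lam * R * Real.sin τ by ring, hden]
    field_simp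
    linear_combination 4 * b ^ 2 * hs
  refine ⟨hconst, ?_, ?_⟩
  · have : (∫ τ in (0:ℝ)..(2 * Real.pi),
        (1 / 2 : ℝ) * kLk lam mu b z (z.1 + R * Real.cos τ, z.2 + lam * R * Real.sin τ)
          * (R * (lam * Real.cos τ)))
        = ∫ τ in (0:ℝ)..(2 * Real.pi),
          ((1 / 2 : ℝ) * (mu * b ^ 2 / (4 * Real.pi ^ 2 * R ^ 2)) * (R * lam)) * Real.cos τ := by
      apply intervalIntegral.integral_congr
      intro τ _
      simp only [hconst]; ring
    rw [this, intervalIntegral.integral_const_mul, integral_cos]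
    simp
  · have : (∫ τ in (0:ℝ)..(2 * Real.pi),
        (1 / 2 : ℝ) * kLk lam mu b z (z.1 + R * Real.cos τ, z.2 + lam * R * Real.sin τ)
          * (R * Real.sin τ))
        = ∫ τ in (0:ℝ)..(2 * Real.pi),
          ((1 / 2 : ℝ) * (mu * b ^ 2 / (4 * Real.pi ^ 2 * R ^ 2)) * R) * Real.sin τ := by
      apply intervalIntegral.integral_congr
      intro τ _
      simp only [hconst]; ring
    rw [this, intervalIntegral.integral_const_mul, integral_sin]
    simp
end

section
/- Let h̃ : closure(E_R(z)) → ℝ² be continuous. Then lim_{R→0} ∫_{∂E_R(z)} (n ⊗ k − k ⊗ n) L h̃ ds = b J L h̃(z), where k is the fundamental singular strain at z with Burgers modulus b, n is the outward unit normal to the ellipse E_R(z), J = ((0,1),(−1,0)), and L = diag(μ, μλ²). -/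
open Real

lemma kfun_eval (lam b R τ : ℝ) (z : ℝ × ℝ) (hlam : lam ≠ 0) (hR : R ≠ 0) :
    kfun lam b z (z.1 + R * Real.cos τ, z.2 + lam * R * Real.sin τ)
      = (-(b * Real.sin τ) / (2 * π * R), b * Real.cos τ / (2 * π * lam * R)) := by
  have h1 : Real.sin τ ^ 2 + Real.cos τ ^ 2 = 1 := sin_sq_add_cos_sq τ
  have hπ : (π : ℝ) ≠ 0 := Real.pi_ne_zero
  have hden : lam ^ 2 * (z.1 + R * Real.cos τ - z.1) ^ 2 + (z.2 + lam * R * Real.sin τ - z.2) ^ 2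
      = lam ^ 2 * R ^ 2 := by linear_combination (lam ^ 2 * R ^ 2) * h1
  simp only [kfun, hden, Prod.mk.injEq]
  constructor <;> (field_simp; ring)

lemma sqrtA_pos (lam τ : ℝ) (hlam : 0 < lam) :
    0 < Real.sqrt (lam ^ 2 * Real.cos τ ^ 2 + Real.sin τ ^ 2) := by
  apply Real.sqrt_pos.mpr
  have h1 : Real.sin τ ^ 2 + Real.cos τ ^ 2 = 1 := sin_sq_add_cos_sq τ
  rcases le_total (lam ^ 2) 1 with h | h
  · nlinarith [sq_nonneg (Real.cos τ), pow_pos hlam 2]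
  · nlinarith [sq_nonneg (Real.cos τ), sq_nonneg (Real.sin τ), pow_pos hlam 2]

lemma integrand1_eq (lam mu b R τ v : ℝ) (hlam : 0 < lam) (hR : R ≠ 0) (z : ℝ × ℝ) :
    ((lam * Real.cos τ / Real.sqrt (lam ^ 2 * Real.cos τ ^ 2 + Real.sin τ ^ 2)) *
        (kfun lam b z (z.1 + R * Real.cos τ, z.2 + lam * R * Real.sin τ)).2
      - (kfun lam b z (z.1 + R * Real.cos τ, z.2 + lam * R * Real.sin τ)).1 *
        (Real.sin τ / Real.sqrt (lam ^ 2 * Real.cos τ ^ 2 + Real.sin τ ^ 2)))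
    * (mu * lam ^ 2 * v)
    * (R * Real.sqrt (lam ^ 2 * Real.cos τ ^ 2 + Real.sin τ ^ 2))
    = b * mu * lam ^ 2 / (2 * π) * v := by
  have h1 : Real.sin τ ^ 2 + Real.cos τ ^ 2 = 1 := sin_sq_add_cos_sq τ
  have hπ : (π : ℝ) ≠ 0 := Real.pi_ne_zero
  have hs := sqrtA_pos lam τ hlam
  rw [kfun_eval lam b R τ z hlam.ne' hR]
  field_simp
  linear_combination (b * mu * v) * h1

lemma integrand2_eq (lam mu b R τ v : ℝ) (hlam : 0 < lam) (hR : R ≠ 0) (z : ℝ × ℝ) :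
    ((Real.sin τ / Real.sqrt (lam ^ 2 * Real.cos τ ^ 2 + Real.sin τ ^ 2)) *
        (kfun lam b z (z.1 + R * Real.cos τ, z.2 + lam * R * Real.sin τ)).1
      - (kfun lam b z (z.1 + R * Real.cos τ, z.2 + lam * R * Real.sin τ)).2 *
        (lam * Real.cos τ / Real.sqrt (lam ^ 2 * Real.cos τ ^ 2 + Real.sin τ ^ 2)))
    * (mu * v)
    * (R * Real.sqrt (lam ^ 2 * Real.cos τ ^ 2 + Real.sin τ ^ 2))
    = -(b * mu) / (2 * π) * v := by
  have h1 : Real.sin τ ^ 2 + Real.cos τ ^ 2 = 1 := sin_sq_add_cos_sq τ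
  have hπ : (π : ℝ) ≠ 0 := Real.pi_ne_zero
  have hs := sqrtA_pos lam τ hlam
  rw [kfun_eval lam b R τ z hlam.ne' hR]
  field_simp
  linear_combination (-(b * mu * v)) * h1

/-- Let `h̃` be continuous on `closure(E_{R₀}(z))`.  Then
`∫_{∂E_R(z)} (n ⊗ k − k ⊗ n) L h̃ ds → b J L h̃(z)` as `R → 0⁺`, where
`L = diag(μ, μλ²)`, `J = ((0,1),(−1,0))`, the boundary being parametrized by the
eccentric anomaly, with `n = (λcos τ, sin τ)/√(λ²cos²τ+sin²τ)` and
`ds = R √(λ²cos²τ+sin²τ) dτ`; the integrals below are the two components of the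
matrix-vector product `(n ⊗ k − k ⊗ n) L h̃` integrated over the boundary. -/
theorem tendsto_boundary_cross_term (lam mu b R₀ : ℝ) (hlam : 0 < lam) (hmu : 0 < mu)
    (hR₀ : 0 < R₀) (z : ℝ × ℝ) (htil : ℝ × ℝ → ℝ × ℝ)
    (hcont : ContinuousOn htil (closure (ellipse lam z R₀))) :
    Filter.Tendsto (fun R : ℝ =>
      ((∫ τ in (0:ℝ)..(2 * Real.pi),
          ((lam * Real.cos τ / Real.sqrt (lam ^ 2 * Real.cos τ ^ 2 + Real.sin τ ^ 2)) *
              (kfun lam b z (z.1 + R * Real.cos τ, z.2 + lam * R * Real.sin τ)).2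
            - (kfun lam b z (z.1 + R * Real.cos τ, z.2 + lam * R * Real.sin τ)).1 *
              (Real.sin τ / Real.sqrt (lam ^ 2 * Real.cos τ ^ 2 + Real.sin τ ^ 2)))
          * (mu * lam ^ 2 * (htil (z.1 + R * Real.cos τ, z.2 + lam * R * Real.sin τ)).2)
          * (R * Real.sqrt (lam ^ 2 * Real.cos τ ^ 2 + Real.sin τ ^ 2))),
       (∫ τ in (0:ℝ)..(2 * Real.pi),
          ((Real.sin τ / Real.sqrt (lam ^ 2 * Real.cos τ ^ 2 + Real.sin τ ^ 2)) *
              (kfun lam b z (z.1 + R * Real.cos τ, z.2 + lam * R * Real.sin τ)).1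
            - (kfun lam b z (z.1 + R * Real.cos τ, z.2 + lam * R * Real.sin τ)).2 *
              (lam * Real.cos τ / Real.sqrt (lam ^ 2 * Real.cos τ ^ 2 + Real.sin τ ^ 2)))
          * (mu * (htil (z.1 + R * Real.cos τ, z.2 + lam * R * Real.sin τ)).1)
          * (R * Real.sqrt (lam ^ 2 * Real.cos τ ^ 2 + Real.sin τ ^ 2)))))
      (nhdsWithin 0 (Set.Ioo 0 R₀))
      (nhds (b * (mu * lam ^ 2 * (htil z).2), b * (-(mu * (htil z).1)))) := by
  have hlam' : lam ≠ 0 := ne_of_gt hlam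
  have hπ : (π : ℝ) ≠ 0 := Real.pi_ne_zero
  set g : ℝ → ℝ → ℝ × ℝ := fun R τ => (z.1 + R * Real.cos τ, z.2 + lam * R * Real.sin τ) with hg
  -- points stay in the closed ellipse
  have hmem : ∀ R : ℝ, 0 ≤ R → R < R₀ → ∀ τ : ℝ, g R τ ∈ closure (ellipse lam z R₀) := by
    intro R hR0 hRR τ
    apply subset_closure
    show (z.1 + R * Real.cos τ - z.1) ^ 2 + ((z.2 + lam * R * Real.sin τ - z.2) / lam) ^ 2 < R₀ ^ 2
    have h1 : Real.sin τ ^ 2 + Real.cos τ ^ 2 = 1 := sin_sq_add_cos_sq τ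
    have he : (z.1 + R * Real.cos τ - z.1) ^ 2 + ((z.2 + lam * R * Real.sin τ - z.2) / lam) ^ 2
        = R ^ 2 := by field_simp; linear_combination (lam ^ 2 * R ^ 2) * h1
    rw [he]
    nlinarith
  -- bound for htil on the compact ellipse closure
  have hcompact : IsCompact (closure (ellipse lam z R₀)) := by
    apply Metric.isCompact_of_isClosed_isBounded isClosed_closure
    apply Bornology.IsBounded.closure
    apply (Metric.isBounded_iff_subset_closedBall z).mpr
    refine ⟨R₀ + lam * R₀, fun x hx => ?_⟩
    simp only [ellipse, Set.mem_setOf_eq] at hx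
    have h1 : (x.1 - z.1) ^ 2 < R₀ ^ 2 := by nlinarith [sq_nonneg ((x.2 - z.2)/lam)]
    have h2 : ((x.2 - z.2)/lam) ^ 2 < R₀ ^ 2 := by nlinarith [sq_nonneg (x.1 - z.1)]
    have hb1 : |x.1 - z.1| ≤ R₀ := by nlinarith [abs_nonneg (x.1 - z.1), sq_abs (x.1 - z.1)]
    have hb2 : |x.2 - z.2| ≤ lam * R₀ := by
      have h3 : |(x.2 - z.2)/lam| ≤ R₀ := by
        nlinarith [abs_nonneg ((x.2 - z.2)/lam), sq_abs ((x.2 - z.2)/lam)]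
      rw [abs_div, abs_of_pos hlam] at h3
      calc |x.2 - z.2| = lam * (|x.2 - z.2| / lam) := by field_simp
        _ ≤ lam * R₀ := mul_le_mul_of_nonneg_left h3 hlam.le
    have hlr : (0:ℝ) ≤ lam * R₀ := by positivity
    rw [Metric.mem_closedBall, Prod.dist_eq]
    apply max_le <;> rw [Real.dist_eq] <;> [linarith; linarith]
  obtain ⟨C, hC⟩ := hcompact.exists_bound_of_continuousOn hcont
  -- continuity at 0 of the parametrized integrals
  have hIcont : ∀ f : ℝ × ℝ → ℝ, Continuous f → (∀ x : ℝ × ℝ, ‖f x‖ ≤ ‖x‖) →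
      Filter.Tendsto (fun R => ∫ τ in (0:ℝ)..(2 * π), f (htil (g R τ)))
        (nhdsWithin 0 (Set.Ioo 0 R₀)) (nhds (2 * π * f (htil z))) := by
    intro f hfc hf
    have key : ContinuousWithinAt (fun R => ∫ τ in (0:ℝ)..(2 * π), f (htil (g R τ)))
        (Set.Ioo 0 R₀) 0 := by
      apply intervalIntegral.continuousWithinAt_of_dominated_interval (bound := fun _ => C)
      · filter_upwards [self_mem_nhdsWithin] with R hR
        apply Continuous.aestronglyMeasurable
        apply hfc.comp
        apply hcont.comp_continuous (by fun_prop) (fun τ => hmem R hR.1.le hR.2 τ)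
      · filter_upwards [self_mem_nhdsWithin] with R hR
        filter_upwards with τ _
        calc ‖f (htil (g R τ))‖ ≤ ‖htil (g R τ)‖ := hf _
          _ ≤ C := hC _ (hmem R hR.1.le hR.2 τ)
      · exact intervalIntegrable_const
      · filter_upwards with τ _
        have hgt : Continuous (fun R : ℝ => g R τ) := by fun_prop
        have hmaps : Set.MapsTo (fun R : ℝ => g R τ) (Set.Ioo 0 R₀)
            (closure (ellipse lam z R₀)) := fun R hR => hmem R hR.1.le hR.2 τ
        have ht : ContinuousWithinAt htil (closure (ellipse lam z R₀)) (g 0 τ) :=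
          hcont _ (hmem 0 le_rfl hR₀ τ)
        have hcomp : ContinuousWithinAt (fun R => htil (g R τ)) (Set.Ioo 0 R₀) 0 :=
          ContinuousWithinAt.comp ht hgt.continuousWithinAt hmaps
        exact ContinuousAt.comp_continuousWithinAt hfc.continuousAt hcomp
    have h0 : (∫ τ in (0:ℝ)..(2 * π), f (htil (g 0 τ))) = 2 * π * f (htil z) := by
      have hz : ∀ τ : ℝ, g 0 τ = z := by
        intro τ; simp [hg]
      simp only [hz, intervalIntegral.integral_const, smul_eq_mul, sub_zero]
    rw [← h0]
    exact key.tendsto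
  have h2 := hIcont (fun p => p.2) continuous_snd (fun x => norm_snd_le x)
  have h1 := hIcont (fun p => p.1) continuous_fst (fun x => norm_fst_le x)
  have hT : Filter.Tendsto (fun R : ℝ =>
      ((b * mu * lam ^ 2 / (2 * π)) * ∫ τ in (0:ℝ)..(2 * π), (htil (g R τ)).2,
       (-(b * mu) / (2 * π)) * ∫ τ in (0:ℝ)..(2 * π), (htil (g R τ)).1))
      (nhdsWithin 0 (Set.Ioo 0 R₀))
      (nhds (b * (mu * lam ^ 2 * (htil z).2), b * (-(mu * (htil z).1)))) := by
    have hA : Filter.Tendsto (fun R : ℝ =>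
        (b * mu * lam ^ 2 / (2 * π)) * ∫ τ in (0:ℝ)..(2 * π), (htil (g R τ)).2)
        (nhdsWithin 0 (Set.Ioo 0 R₀)) (nhds (b * (mu * lam ^ 2 * (htil z).2))) := by
      have := (tendsto_const_nhds (x := b * mu * lam ^ 2 / (2 * π))
        (f := nhdsWithin (0:ℝ) (Set.Ioo 0 R₀))).mul h2
      convert this using 2
      field_simp
    have hB : Filter.Tendsto (fun R : ℝ =>
        (-(b * mu) / (2 * π)) * ∫ τ in (0:ℝ)..(2 * π), (htil (g R τ)).1)
        (nhdsWithin 0 (Set.Ioo 0 R₀)) (nhds (b * (-(mu * (htil z).1)))) := by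
      have := (tendsto_const_nhds (x := -(b * mu) / (2 * π))
        (f := nhdsWithin (0:ℝ) (Set.Ioo 0 R₀))).mul h1
      convert this using 2
      field_simp
    exact hA.prodMk_nhds hB
  apply hT.congr'
  filter_upwards [self_mem_nhdsWithin] with R hR
  have hRn : R ≠ 0 := ne_of_gt hR.1
  refine Prod.ext ?_ ?_
  · show (b * mu * lam ^ 2 / (2 * π)) * ∫ τ in (0:ℝ)..(2 * π), (htil (g R τ)).2 = _
    rw [← intervalIntegral.integral_const_mul]
    apply intervalIntegral.integral_congr
    intro τ _
    exact (integrand1_eq lam mu b R τ ((htil (g R τ)).2) hlam hRn z).symm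
  · show (-(b * mu) / (2 * π)) * ∫ τ in (0:ℝ)..(2 * π), (htil (g R τ)).1 = _
    rw [← intervalIntegral.integral_const_mul]
    apply intervalIntegral.integral_congr
    intro τ _
    exact (integrand2_eq lam mu b R τ ((htil (g R τ)).1) hlam hRn z).symm
end

section
/- Let h₀ = k_ℓ + h̃ where k_ℓ is the fundamental singular strain at z_ℓ with Burgers modulus b_ℓ and h̃ is continuous near z_ℓ. Then for the Eshelby stress C = W(h₀)I − h₀ ⊗ (Lh₀), the limit lim_{R→0} ∫_{∂E_R(z_ℓ)} C n ds = b_ℓ J L h̃(z_ℓ), where J = ((0,1),(−1,0)), n is the outward unit normal to E_R(z_ℓ), and W(h) = (1/2) h · Lh. -/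
/-- `L p` for `L = diag(μ, μλ²)`. -/
def mulL (mu lam : ℝ) (p : ℝ × ℝ) : ℝ × ℝ := (mu * p.1, mu * lam ^ 2 * p.2)

/-- The dot product on `ℝ × ℝ`. -/
def dot (p q : ℝ × ℝ) : ℝ := p.1 * q.1 + p.2 * q.2

/-- The energy density `W(h) = (1/2) h·Lh`. -/
noncomputable def Wen (mu lam : ℝ) (p : ℝ × ℝ) : ℝ := (1 / 2 : ℝ) * dot p (mulL mu lam p)

open Real Filter MeasureTheory intervalIntegral Set Topology

/-- Value of `kfun` on the boundary of the ellipse of radius `R`. -/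
lemma kfun_boundary (lam b R τ : ℝ) (hlam : lam ≠ 0) (hR : R ≠ 0) (zl : ℝ × ℝ) :
    kfun lam b zl (zl.1 + R * Real.cos τ, zl.2 + lam * R * Real.sin τ)
      = (-(b / (2 * Real.pi * R) * Real.sin τ), b / (2 * Real.pi * lam * R) * Real.cos τ) := by
  have hπ := Real.pi_ne_zero
  have hd : lam ^ 2 * (zl.1 + R * Real.cos τ - zl.1) ^ 2
      + (zl.2 + lam * R * Real.sin τ - zl.2) ^ 2 = lam ^ 2 * R ^ 2 := by
    linear_combination (lam ^ 2 * R ^ 2) * (Real.sin_sq_add_cos_sq τ)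
  simp only [kfun, hd]
  have hlr : lam ^ 2 * R ^ 2 ≠ 0 := by positivity
  refine Prod.ext ?_ ?_ <;> field_simp <;> ring

/-- Algebraic identity for the first component of the Eshelby boundary integrand. -/
lemma alg1 (mu lam R s c q k2 b2 : ℝ) (p : ℝ × ℝ) (hsc : s ^ 2 + c ^ 2 = 1)
    (hk2 : lam * k2 = q * c) (hb2 : q * R = b2) :
    (Wen mu lam ((-(q * s), k2) + p) * (lam * c)
        - ((-(q * s), k2) + p).1 * dot (mulL mu lam ((-(q * s), k2) + p)) (lam * c, s)) * R
      = mu * lam ^ 2 * b2 * p.2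
        + (Wen mu lam p * (lam * c) - p.1 * dot (mulL mu lam p) (lam * c, s)) * R
        + (1 / 2 * mu * q ^ 2 * lam * R) * c := by
  obtain ⟨p1, p2⟩ := p
  simp only [Wen, dot, mulL, Prod.mk_add_mk, Prod.fst, Prod.snd]
  linear_combination
    (1/2*mu*lam*R*c^2*q - mu*lam*R*s*p1 + mu*lam*R*s^2*q + mu*lam^2*R*c*p2
      + 1/2*mu*lam^2*R*c*k2) * hk2
    + (1/2*mu*lam*R*c*q^2 + mu*lam^2*R*q*p2) * hsc
    + (mu*lam^2*p2) * hb2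

/-- Algebraic identity for the second component of the Eshelby boundary integrand. -/
lemma alg2 (mu lam R s c q k2 b2 : ℝ) (p : ℝ × ℝ) (hsc : s ^ 2 + c ^ 2 = 1)
    (hk2 : lam * k2 = q * c) (hb2 : q * R = b2) :
    (Wen mu lam ((-(q * s), k2) + p) * s
        - ((-(q * s), k2) + p).2 * dot (mulL mu lam ((-(q * s), k2) + p)) (lam * c, s)) * R
      = -(mu * b2 * p.1)
        + (Wen mu lam p * s - p.2 * dot (mulL mu lam p) (lam * c, s)) * R
        + (1 / 2 * mu * q ^ 2 * R) * s := by
  obtain ⟨p1, p2⟩ := p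
  simp only [Wen, dot, mulL, Prod.mk_add_mk, Prod.fst, Prod.snd]
  linear_combination
    (-(mu*R*c*p1) + 1/2*mu*R*s*c*q - mu*lam*R*s*p2 - 1/2*mu*lam*R*s*k2) * hk2
    + (-(mu*R*q*p1) + 1/2*mu*R*s*q^2) * hsc
    + (-(mu*p1)) * hb2

lemma mem_ellipse (lam R₀ R τ : ℝ) (hlam : lam ≠ 0) (hR : 0 ≤ R) (hR' : R < R₀) (zl : ℝ × ℝ) :
    (zl.1 + R * Real.cos τ, zl.2 + lam * R * Real.sin τ) ∈ ellipse lam zl R₀ := by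
  simp only [ellipse, Set.mem_setOf_eq]
  have h2 : (zl.2 + lam * R * Real.sin τ - zl.2) / lam = R * Real.sin τ := by
    field_simp
    ring
  rw [show zl.1 + R * Real.cos τ - zl.1 = R * Real.cos τ by ring, h2]
  have hsc := Real.sin_sq_add_cos_sq τ
  nlinarith [hsc, sq_nonneg R]

/-- Main convergence lemma: for a continuous parametrized integrand composed with
`htil` on the shrinking ellipse boundary, the integral converges to the integral of
the value at the center with `R = 0`. -/
lemma tendsto_aux (lam R₀ : ℝ) (hlam : 0 < lam) (hR₀ : 0 < R₀) (zl : ℝ × ℝ)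
    (htil : ℝ × ℝ → ℝ × ℝ) (hcont : ContinuousOn htil (closure (ellipse lam zl R₀)))
    (Φ : (ℝ × ℝ) × ℝ × ℝ → ℝ) (hΦ : Continuous Φ) :
    Tendsto (fun R : ℝ => ∫ τ in (0:ℝ)..(2 * Real.pi),
        Φ (htil (zl.1 + R * Real.cos τ, zl.2 + lam * R * Real.sin τ), R, τ))
      (nhdsWithin 0 (Set.Ioo 0 R₀))
      (𝓝 (∫ τ in (0:ℝ)..(2 * Real.pi), Φ (htil zl, 0, τ))) := by
  set S := closure (ellipse lam zl R₀) with hS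
  -- the ellipse is bounded, so S is compact
  have hbd : Bornology.IsBounded (ellipse lam zl R₀) := by
    apply Bornology.IsBounded.subset (Metric.isBounded_ball (x := zl) (r := R₀ * (1 + lam)))
    intro x hx
    simp only [ellipse, Set.mem_setOf_eq] at hx
    have h1 : (x.1 - zl.1) ^ 2 < R₀ ^ 2 := by nlinarith [sq_nonneg ((x.2 - zl.2) / lam)]
    have h2 : ((x.2 - zl.2) / lam) ^ 2 < R₀ ^ 2 := by nlinarith [sq_nonneg (x.1 - zl.1)]
    have h1' : |x.1 - zl.1| < R₀ := by
      rw [← Real.sqrt_sq_eq_abs]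
      calc Real.sqrt ((x.1 - zl.1) ^ 2) < Real.sqrt (R₀ ^ 2) := by
            exact Real.sqrt_lt_sqrt (by positivity) h1
        _ = R₀ := Real.sqrt_sq hR₀.le
    have h2' : |x.2 - zl.2| < R₀ * lam := by
      have : |(x.2 - zl.2) / lam| < R₀ := by
        rw [← Real.sqrt_sq_eq_abs]
        calc Real.sqrt (((x.2 - zl.2) / lam) ^ 2) < Real.sqrt (R₀ ^ 2) :=
              Real.sqrt_lt_sqrt (by positivity) h2
          _ = R₀ := Real.sqrt_sq hR₀.le
      rw [abs_div, abs_of_pos hlam, div_lt_iff₀ hlam] at this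
      linarith
    have : dist x zl < R₀ * (1 + lam) := by
      rw [Prod.dist_eq]
      have d1 : dist x.1 zl.1 < R₀ * (1 + lam) := by
        rw [Real.dist_eq]; nlinarith
      have d2 : dist x.2 zl.2 < R₀ * (1 + lam) := by
        rw [Real.dist_eq]; nlinarith
      exact max_lt d1 d2
    exact Metric.mem_ball.mpr this
  have hScomp : IsCompact S := Metric.isCompact_of_isClosed_isBounded isClosed_closure
    hbd.closure
  have hzl : zl ∈ S := subset_closure (by
    simp only [ellipse, Set.mem_setOf_eq, sub_self]
    simpa using by positivity)
  -- membership of boundary points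
  have hmem : ∀ R τ : ℝ, 0 ≤ R → R < R₀ →
      (zl.1 + R * Real.cos τ, zl.2 + lam * R * Real.sin τ) ∈ S :=
    fun R τ h1 h2 => subset_closure (mem_ellipse lam R₀ R τ hlam.ne' h1 h2 zl)
  -- bound from compactness
  have hIm : IsCompact (htil '' S) := hScomp.image_of_continuousOn hcont
  have hT : IsCompact ((htil '' S) ×ˢ (Set.Icc (0:ℝ) (R₀/2) ×ˢ Set.Icc (0:ℝ) (2 * Real.pi))) :=
    hIm.prod (isCompact_Icc.prod isCompact_Icc)
  obtain ⟨C, hC⟩ := hT.exists_bound_of_continuousOn hΦ.continuousOn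
  have hev : ∀ᶠ R in nhdsWithin (0:ℝ) (Set.Ioo 0 R₀), R ∈ Set.Ioo (0:ℝ) (R₀/2) := by
    have h1 : ∀ᶠ R in nhdsWithin (0:ℝ) (Set.Ioo 0 R₀), R ∈ Set.Ioo (0:ℝ) R₀ :=
      self_mem_nhdsWithin
    have h2 : ∀ᶠ R in nhdsWithin (0:ℝ) (Set.Ioo 0 R₀), R < R₀/2 :=
      Filter.Eventually.filter_mono nhdsWithin_le_nhds
        (eventually_lt_nhds (by positivity))
    filter_upwards [h1, h2] with R hR1 hR2
    exact ⟨hR1.1, hR2⟩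
  apply intervalIntegral.tendsto_integral_filter_of_dominated_convergence (fun _ => C)
  · -- measurability
    filter_upwards [hev] with R hR
    have hxc : Continuous fun τ : ℝ =>
        (zl.1 + R * Real.cos τ, zl.2 + lam * R * Real.sin τ) := by fun_prop
    have hhc : Continuous fun τ : ℝ =>
        htil (zl.1 + R * Real.cos τ, zl.2 + lam * R * Real.sin τ) :=
      hcont.comp_continuous hxc (fun τ => hmem R τ hR.1.le (by linarith [hR.2]))
    exact ((hΦ.comp (hhc.prodMk (continuous_const.prodMk continuous_id))).aestronglyMeasurable)
  · -- bound
    filter_upwards [hev] with R hR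
    refine ae_of_all _ fun τ hτ => ?_
    have hτ' : τ ∈ Set.Icc (0:ℝ) (2 * Real.pi) := by
      rw [Set.uIoc_of_le (by positivity : (0:ℝ) ≤ 2 * Real.pi)] at hτ
      exact ⟨hτ.1.le, hτ.2⟩
    exact hC _ ⟨Set.mem_image_of_mem _ (hmem R τ hR.1.le (by linarith [hR.2])),
      ⟨hR.1.le, hR.2.le⟩, hτ'⟩
  · -- integrability of the bound
    exact intervalIntegrable_const
  · -- pointwise convergence
    refine ae_of_all _ fun τ _ => ?_
    have hx0 : Tendsto (fun R : ℝ => (zl.1 + R * Real.cos τ, zl.2 + lam * R * Real.sin τ))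
        (nhdsWithin (0:ℝ) (Set.Ioo 0 R₀)) (𝓝 zl) := by
      have : Continuous fun R : ℝ =>
          (zl.1 + R * Real.cos τ, zl.2 + lam * R * Real.sin τ) := by fun_prop
      have h0 := (this.tendsto 0).mono_left (nhdsWithin_le_nhds
        (s := Set.Ioo (0:ℝ) R₀))
      simpa using h0
    have hxS : Tendsto (fun R : ℝ => (zl.1 + R * Real.cos τ, zl.2 + lam * R * Real.sin τ))
        (nhdsWithin (0:ℝ) (Set.Ioo 0 R₀)) (nhdsWithin zl S) := by
      rw [tendsto_nhdsWithin_iff]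
      refine ⟨hx0, ?_⟩
      filter_upwards [self_mem_nhdsWithin] with R hR
      exact hmem R τ hR.1.le hR.2
    have hh : Tendsto (fun R : ℝ =>
        htil (zl.1 + R * Real.cos τ, zl.2 + lam * R * Real.sin τ))
        (nhdsWithin (0:ℝ) (Set.Ioo 0 R₀)) (𝓝 (htil zl)) :=
      ((hcont zl hzl).tendsto).comp hxS
    have hid : Tendsto (fun R : ℝ => R) (nhdsWithin (0:ℝ) (Set.Ioo 0 R₀)) (𝓝 0) :=
      Filter.tendsto_id.mono_right nhdsWithin_le_nhds
    exact (hΦ.tendsto _).comp (hh.prodMk_nhds (hid.prodMk_nhds tendsto_const_nhds))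

/-- Let `h₀ = k_ℓ + h̃` with `h̃` continuous near `z_ℓ`.  For the Eshelby stress
`C = W(h₀)I − h₀ ⊗ (Lh₀)`, one has
`lim_{R→0} ∫_{∂E_R(z_ℓ)} C n ds = b_ℓ J L h̃(z_ℓ)`, `J = ((0,1),(−1,0))`, the boundary
being parametrized by eccentric anomaly, with `n ds = R (λ cos τ, sin τ) dτ`. -/
theorem tendsto_eshelby_boundary_integral (lam mu b R₀ : ℝ)
    (hlam : 0 < lam) (hmu : 0 < mu) (hR₀ : 0 < R₀) (zl : ℝ × ℝ)
    (htil : ℝ × ℝ → ℝ × ℝ) (hcont : ContinuousOn htil (closure (ellipse lam zl R₀)))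
    (h₀ : ℝ × ℝ → ℝ × ℝ) (hh₀ : ∀ x, h₀ x = kfun lam b zl x + htil x) :
    Filter.Tendsto (fun R : ℝ =>
      ((∫ τ in (0:ℝ)..(2 * Real.pi),
          (Wen mu lam (h₀ (zl.1 + R * Real.cos τ, zl.2 + lam * R * Real.sin τ))
              * (lam * Real.cos τ)
            - (h₀ (zl.1 + R * Real.cos τ, zl.2 + lam * R * Real.sin τ)).1 *
              dot (mulL mu lam (h₀ (zl.1 + R * Real.cos τ, zl.2 + lam * R * Real.sin τ)))
                (lam * Real.cos τ, Real.sin τ)) * R),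
       (∫ τ in (0:ℝ)..(2 * Real.pi),
          (Wen mu lam (h₀ (zl.1 + R * Real.cos τ, zl.2 + lam * R * Real.sin τ))
              * Real.sin τ
            - (h₀ (zl.1 + R * Real.cos τ, zl.2 + lam * R * Real.sin τ)).2 *
              dot (mulL mu lam (h₀ (zl.1 + R * Real.cos τ, zl.2 + lam * R * Real.sin τ)))
                (lam * Real.cos τ, Real.sin τ)) * R)))
      (nhdsWithin 0 (Set.Ioo 0 R₀))
      (nhds (b * (mu * lam ^ 2 * (htil zl).2), b * (-(mu * (htil zl).1)))) := by
  have hπ := Real.pi_ne_zero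
  have hπpos := Real.pi_pos
  set S := closure (ellipse lam zl R₀) with hSdef
  set l := nhdsWithin (0:ℝ) (Set.Ioo 0 R₀) with hl
  -- the two parametrized integrands
  set Φ₁ : (ℝ × ℝ) × ℝ × ℝ → ℝ := fun w =>
    mu * lam ^ 2 * (b / (2 * Real.pi)) * w.1.2
      + (Wen mu lam w.1 * (lam * Real.cos w.2.2)
          - w.1.1 * dot (mulL mu lam w.1) (lam * Real.cos w.2.2, Real.sin w.2.2)) * w.2.1
    with hΦ₁def
  set Φ₂ : (ℝ × ℝ) × ℝ × ℝ → ℝ := fun w =>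
    -(mu * (b / (2 * Real.pi)) * w.1.1)
      + (Wen mu lam w.1 * Real.sin w.2.2
          - w.1.2 * dot (mulL mu lam w.1) (lam * Real.cos w.2.2, Real.sin w.2.2)) * w.2.1
    with hΦ₂def
  have hΦ₁ : Continuous Φ₁ := by rw [hΦ₁def]; unfold Wen dot mulL; fun_prop
  have hΦ₂ : Continuous Φ₂ := by rw [hΦ₂def]; unfold Wen dot mulL; fun_prop
  have T₁ := tendsto_aux lam R₀ hlam hR₀ zl htil hcont Φ₁ hΦ₁
  have T₂ := tendsto_aux lam R₀ hlam hR₀ zl htil hcont Φ₂ hΦ₂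
  -- value of the limit integrals
  have V₁ : (∫ τ in (0:ℝ)..(2 * Real.pi), Φ₁ (htil zl, 0, τ))
      = b * (mu * lam ^ 2 * (htil zl).2) := by
    simp only [hΦ₁def, mul_zero, add_zero]
    rw [intervalIntegral.integral_const, smul_eq_mul]
    field_simp
    ring
  have V₂ : (∫ τ in (0:ℝ)..(2 * Real.pi), Φ₂ (htil zl, 0, τ))
      = b * (-(mu * (htil zl).1)) := by
    simp only [hΦ₂def, mul_zero, add_zero]
    rw [intervalIntegral.integral_const, smul_eq_mul]
    field_simp
    ring
  rw [← V₁, ← V₂]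
  -- eventual equality of the integrals
  have hev : ∀ᶠ R in l, R ∈ Set.Ioo (0:ℝ) R₀ := self_mem_nhdsWithin
  have E₁ : ∀ᶠ R in l, (∫ τ in (0:ℝ)..(2 * Real.pi),
      (Wen mu lam (h₀ (zl.1 + R * Real.cos τ, zl.2 + lam * R * Real.sin τ))
          * (lam * Real.cos τ)
        - (h₀ (zl.1 + R * Real.cos τ, zl.2 + lam * R * Real.sin τ)).1 *
          dot (mulL mu lam (h₀ (zl.1 + R * Real.cos τ, zl.2 + lam * R * Real.sin τ)))
            (lam * Real.cos τ, Real.sin τ)) * R)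
      = ∫ τ in (0:ℝ)..(2 * Real.pi),
          Φ₁ (htil (zl.1 + R * Real.cos τ, zl.2 + lam * R * Real.sin τ), R, τ) := by
    filter_upwards [hev] with R hR
    have hRne : R ≠ 0 := ne_of_gt hR.1
    have hpt : ∀ τ : ℝ,
        (Wen mu lam (h₀ (zl.1 + R * Real.cos τ, zl.2 + lam * R * Real.sin τ))
            * (lam * Real.cos τ)
          - (h₀ (zl.1 + R * Real.cos τ, zl.2 + lam * R * Real.sin τ)).1 *
            dot (mulL mu lam (h₀ (zl.1 + R * Real.cos τ, zl.2 + lam * R * Real.sin τ)))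
              (lam * Real.cos τ, Real.sin τ)) * R
        = Φ₁ (htil (zl.1 + R * Real.cos τ, zl.2 + lam * R * Real.sin τ), R, τ)
          + (1 / 2 * mu * (b / (2 * Real.pi * R)) ^ 2 * lam * R) * Real.cos τ := by
      intro τ
      rw [hh₀, kfun_boundary lam b R τ hlam.ne' hRne zl]
      have hk2 : lam * (b / (2 * Real.pi * lam * R) * Real.cos τ)
          = (b / (2 * Real.pi * R)) * Real.cos τ := by
        field_simp
      have hb2 : (b / (2 * Real.pi * R)) * R = b / (2 * Real.pi) := by
        rw [div_mul_eq_mul_div, mul_div_mul_right _ _ hRne]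
      have := alg1 mu lam R (Real.sin τ) (Real.cos τ) (b / (2 * Real.pi * R))
        (b / (2 * Real.pi * lam * R) * Real.cos τ) (b / (2 * Real.pi))
        (htil (zl.1 + R * Real.cos τ, zl.2 + lam * R * Real.sin τ))
        (Real.sin_sq_add_cos_sq τ) hk2 hb2
      rw [show -(b / (2 * Real.pi * R) * Real.sin τ)
          = -((b / (2 * Real.pi * R)) * Real.sin τ) by ring] at *
      rw [this]
    -- continuity of the Φ₁-integrand in τ
    have hxc : Continuous fun τ : ℝ =>
        (zl.1 + R * Real.cos τ, zl.2 + lam * R * Real.sin τ) := by fun_prop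
    have hhc : Continuous fun τ : ℝ =>
        htil (zl.1 + R * Real.cos τ, zl.2 + lam * R * Real.sin τ) :=
      hcont.comp_continuous hxc
        (fun τ => subset_closure (mem_ellipse lam R₀ R τ hlam.ne' hR.1.le hR.2 zl))
    have hΦc : Continuous fun τ : ℝ =>
        Φ₁ (htil (zl.1 + R * Real.cos τ, zl.2 + lam * R * Real.sin τ), R, τ) :=
      hΦ₁.comp (hhc.prodMk (continuous_const.prodMk continuous_id))
    calc (∫ τ in (0:ℝ)..(2 * Real.pi),
          (Wen mu lam (h₀ (zl.1 + R * Real.cos τ, zl.2 + lam * R * Real.sin τ))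
              * (lam * Real.cos τ)
            - (h₀ (zl.1 + R * Real.cos τ, zl.2 + lam * R * Real.sin τ)).1 *
              dot (mulL mu lam (h₀ (zl.1 + R * Real.cos τ, zl.2 + lam * R * Real.sin τ)))
                (lam * Real.cos τ, Real.sin τ)) * R)
        = ∫ τ in (0:ℝ)..(2 * Real.pi),
            (Φ₁ (htil (zl.1 + R * Real.cos τ, zl.2 + lam * R * Real.sin τ), R, τ)
              + (1 / 2 * mu * (b / (2 * Real.pi * R)) ^ 2 * lam * R) * Real.cos τ) :=
          intervalIntegral.integral_congr (fun τ _ => hpt τ)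
      _ = (∫ τ in (0:ℝ)..(2 * Real.pi),
            Φ₁ (htil (zl.1 + R * Real.cos τ, zl.2 + lam * R * Real.sin τ), R, τ))
          + ∫ τ in (0:ℝ)..(2 * Real.pi),
            (1 / 2 * mu * (b / (2 * Real.pi * R)) ^ 2 * lam * R) * Real.cos τ := by
          rw [intervalIntegral.integral_add (hΦc.intervalIntegrable _ _)
            ((show Continuous fun τ : ℝ =>
              (1 / 2 * mu * (b / (2 * Real.pi * R)) ^ 2 * lam * R) * Real.cos τ from
              continuous_const.mul Real.continuous_cos).intervalIntegrable _ _)]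
      _ = ∫ τ in (0:ℝ)..(2 * Real.pi),
            Φ₁ (htil (zl.1 + R * Real.cos τ, zl.2 + lam * R * Real.sin τ), R, τ) := by
          rw [intervalIntegral.integral_const_mul, integral_cos]
          simp
  have E₂ : ∀ᶠ R in l, (∫ τ in (0:ℝ)..(2 * Real.pi),
      (Wen mu lam (h₀ (zl.1 + R * Real.cos τ, zl.2 + lam * R * Real.sin τ))
          * Real.sin τ
        - (h₀ (zl.1 + R * Real.cos τ, zl.2 + lam * R * Real.sin τ)).2 *
          dot (mulL mu lam (h₀ (zl.1 + R * Real.cos τ, zl.2 + lam * R * Real.sin τ)))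
            (lam * Real.cos τ, Real.sin τ)) * R)
      = ∫ τ in (0:ℝ)..(2 * Real.pi),
          Φ₂ (htil (zl.1 + R * Real.cos τ, zl.2 + lam * R * Real.sin τ), R, τ) := by
    filter_upwards [hev] with R hR
    have hRne : R ≠ 0 := ne_of_gt hR.1
    have hpt : ∀ τ : ℝ,
        (Wen mu lam (h₀ (zl.1 + R * Real.cos τ, zl.2 + lam * R * Real.sin τ))
            * Real.sin τ
          - (h₀ (zl.1 + R * Real.cos τ, zl.2 + lam * R * Real.sin τ)).2 *
            dot (mulL mu lam (h₀ (zl.1 + R * Real.cos τ, zl.2 + lam * R * Real.sin τ)))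
              (lam * Real.cos τ, Real.sin τ)) * R
        = Φ₂ (htil (zl.1 + R * Real.cos τ, zl.2 + lam * R * Real.sin τ), R, τ)
          + (1 / 2 * mu * (b / (2 * Real.pi * R)) ^ 2 * R) * Real.sin τ := by
      intro τ
      rw [hh₀, kfun_boundary lam b R τ hlam.ne' hRne zl]
      have hk2 : lam * (b / (2 * Real.pi * lam * R) * Real.cos τ)
          = (b / (2 * Real.pi * R)) * Real.cos τ := by
        field_simp
      have hb2 : (b / (2 * Real.pi * R)) * R = b / (2 * Real.pi) := by
        rw [div_mul_eq_mul_div, mul_div_mul_right _ _ hRne]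
      have := alg2 mu lam R (Real.sin τ) (Real.cos τ) (b / (2 * Real.pi * R))
        (b / (2 * Real.pi * lam * R) * Real.cos τ) (b / (2 * Real.pi))
        (htil (zl.1 + R * Real.cos τ, zl.2 + lam * R * Real.sin τ))
        (Real.sin_sq_add_cos_sq τ) hk2 hb2
      rw [show -(b / (2 * Real.pi * R) * Real.sin τ)
          = -((b / (2 * Real.pi * R)) * Real.sin τ) by ring] at *
      rw [this]
    have hxc : Continuous fun τ : ℝ =>
        (zl.1 + R * Real.cos τ, zl.2 + lam * R * Real.sin τ) := by fun_prop
    have hhc : Continuous fun τ : ℝ =>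
        htil (zl.1 + R * Real.cos τ, zl.2 + lam * R * Real.sin τ) :=
      hcont.comp_continuous hxc
        (fun τ => subset_closure (mem_ellipse lam R₀ R τ hlam.ne' hR.1.le hR.2 zl))
    have hΦc : Continuous fun τ : ℝ =>
        Φ₂ (htil (zl.1 + R * Real.cos τ, zl.2 + lam * R * Real.sin τ), R, τ) :=
      hΦ₂.comp (hhc.prodMk (continuous_const.prodMk continuous_id))
    calc (∫ τ in (0:ℝ)..(2 * Real.pi),
          (Wen mu lam (h₀ (zl.1 + R * Real.cos τ, zl.2 + lam * R * Real.sin τ))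
              * Real.sin τ
            - (h₀ (zl.1 + R * Real.cos τ, zl.2 + lam * R * Real.sin τ)).2 *
              dot (mulL mu lam (h₀ (zl.1 + R * Real.cos τ, zl.2 + lam * R * Real.sin τ)))
                (lam * Real.cos τ, Real.sin τ)) * R)
        = ∫ τ in (0:ℝ)..(2 * Real.pi),
            (Φ₂ (htil (zl.1 + R * Real.cos τ, zl.2 + lam * R * Real.sin τ), R, τ)
              + (1 / 2 * mu * (b / (2 * Real.pi * R)) ^ 2 * R) * Real.sin τ) :=
          intervalIntegral.integral_congr (fun τ _ => hpt τ)
      _ = (∫ τ in (0:ℝ)..(2 * Real.pi),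
            Φ₂ (htil (zl.1 + R * Real.cos τ, zl.2 + lam * R * Real.sin τ), R, τ))
          + ∫ τ in (0:ℝ)..(2 * Real.pi),
            (1 / 2 * mu * (b / (2 * Real.pi * R)) ^ 2 * R) * Real.sin τ := by
          rw [intervalIntegral.integral_add (hΦc.intervalIntegrable _ _)
            ((show Continuous fun τ : ℝ =>
              (1 / 2 * mu * (b / (2 * Real.pi * R)) ^ 2 * R) * Real.sin τ from
              continuous_const.mul Real.continuous_sin).intervalIntegrable _ _)]
      _ = ∫ τ in (0:ℝ)..(2 * Real.pi),
            Φ₂ (htil (zl.1 + R * Real.cos τ, zl.2 + lam * R * Real.sin τ), R, τ) := by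
          rw [intervalIntegral.integral_const_mul, integral_sin]
          simp
  exact Filter.Tendsto.prodMk_nhds (T₁.congr' (Filter.EventuallyEq.symm E₁))
    (T₂.congr' (Filter.EventuallyEq.symm E₂))
end
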